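/- Let d : ℕ → ℝ be a sequence and k ≥ 1 a natural number such that the increments of d are k-periodic, i.e. d (m+1+k) − d (m+k) = d (m+1) − d m for every m. Then for every natural number n, d n = d 0 + (↑(n / k)) · (d k − d 0) + ∑_{i=1}^{n % k} (d i − d (i−1)), where n / k is natural-number (floor) division and n % k is the remainder of n modulo k. -/
import Mathlib


/-- Accelerated-zone formula for a cycle with periodic delays: if the increments
of a DBM entry are `k`-periodic, then
`d n = d 0 + ⌊n/k⌋·(d k − d 0) + ∑_{i=1}^{n % k} (d i − d (i−1))`. -/
theorem accelerated_zone_periodic (d : ℕ → ℝ) (k : ℕ) (hk : 1 ≤ k)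
    (hper : ∀ m : ℕ, d (m + 1 + k) - d (m + k) = d (m + 1) - d m) :
    ∀ n : ℕ, d n = d 0 + ((n / k : ℕ) : ℝ) * (d k - d 0) +
      ∑ i ∈ Finset.Icc 1 (n % k), (d i - d (i - 1)) := by
  have hA : ∀ m : ℕ, d (m + k) - d m = d k - d 0 := by
    intro m
    induction m with
    | zero => simp
    | succ m ih =>
      have := hper m
      linarith
  have hB : ∀ q m : ℕ, d (m + q * k) = d m + q * (d k - d 0) := by
    intro q
    induction q with
    | zero => intro m; simp
    | succ q ih =>
      intro m
      have h1 : m + (q + 1) * k = (m + q * k) + k := by ring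
      have h2 := hA (m + q * k)
      rw [h1]
      push_cast
      rw [ih m] at h2
      linarith
  have hC : ∀ r : ℕ, d r = d 0 + ∑ i ∈ Finset.Icc 1 r, (d i - d (i - 1)) := by
    intro r
    induction r with
    | zero => simp
    | succ r ih =>
      rw [Finset.sum_Icc_succ_top (by omega : 1 ≤ r + 1)]
      simp only [Nat.add_sub_cancel]
      linarith
  intro n
  have hn : n = (n % k) + (n / k) * k := (Nat.mod_add_div' n k).symm
  calc d n = d ((n % k) + (n / k) * k) := by rw [← hn]
    _ = d (n % k) + (n / k : ℕ) * (d k - d 0) := hB _ _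
    _ = d 0 + ((n / k : ℕ) : ℝ) * (d k - d 0) +
        ∑ i ∈ Finset.Icc 1 (n % k), (d i - d (i - 1)) := by
        rw [hC (n % k)]; ring
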